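/- (Sufficient decrease.) Let s : E → ℝ be differentiable with L-Lipschitz gradient (L > 0), let h : E → (−∞, ∞] be a proper closed convex function, and set S = s + h. Fix x ∈ E and suppose v minimizes y ↦ h(y) + (L/2)‖y − (x − (1/L)∇s(x))‖². Then S(x) − S(v) ≥ (1/(2L))‖L(x − v)‖² = (L/2)‖x − v‖². -/

import Mathlib

open scoped RealInnerProductSpace

lemma descent_lemma
    {E : Type*} [NormedAddCommGroup E] [InnerProductSpace ℝ E] [CompleteSpace E]
    (s : E → ℝ) (hs : Differentiable ℝ s)
    (L : ℝ) (hL : 0 < L)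
    (hLip : ∀ a b : E, ‖gradient s a - gradient s b‖ ≤ L * ‖a - b‖)
    (a b : E) :
    s b ≤ s a + ⟪gradient s a, b - a⟫ + L / 2 * ‖b - a‖ ^ 2 := by
  set d := b - a with hd
  set φ : ℝ → ℝ := fun t => s (a + t • d) - t * ⟪gradient s a, d⟫ - L / 2 * t ^ 2 * ‖d‖ ^ 2
    with hφ
  have hc : ∀ t : ℝ, HasDerivAt (fun t : ℝ => a + t • d) d t := by
    intro t
    simpa using ((hasDerivAt_id t).smul_const d).const_add a
  have hg : ∀ t : ℝ, HasDerivAt (fun t : ℝ => s (a + t • d))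
      ⟪gradient s (a + t • d), d⟫ t := by
    intro t
    have h1 : HasFDerivAt s ((InnerProductSpace.toDual ℝ E) (gradient s (a + t • d)))
        (a + t • d) := ((hs _).hasGradientAt).hasFDerivAt
    have := h1.comp_hasDerivAt t (hc t)
    simpa [InnerProductSpace.toDual_apply_apply, Function.comp_def] using this
  have hφ' : ∀ t : ℝ, HasDerivAt φ
      (⟪gradient s (a + t • d), d⟫ - ⟪gradient s a, d⟫ - L * t * ‖d‖ ^ 2) t := by
    intro t
    have h2 : HasDerivAt (fun t : ℝ => t * ⟪gradient s a, d⟫) ⟪gradient s a, d⟫ t := by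
      simpa using (hasDerivAt_id t).mul_const ⟪gradient s a, d⟫
    have h3 : HasDerivAt (fun t : ℝ => L / 2 * t ^ 2 * ‖d‖ ^ 2)
        (L * t * ‖d‖ ^ 2) t := by
      have : HasDerivAt (fun y : ℝ => L / 2 * y ^ 2 * ‖d‖ ^ 2) (L / 2 * ((2 : ℕ) * t ^ (2 - 1)) * ‖d‖ ^ 2) t :=
        ((hasDerivAt_pow 2 t).const_mul (L / 2)).mul_const (‖d‖ ^ 2)
      convert this using 1
      ring
    have := ((hg t).sub h2).sub h3
    exact this
  have hbound : ∀ t ∈ Set.Ioo (0:ℝ) 1,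
      ⟪gradient s (a + t • d), d⟫ - ⟪gradient s a, d⟫ - L * t * ‖d‖ ^ 2 ≤ 0 := by
    intro t ht
    have h1 : ⟪gradient s (a + t • d) - gradient s a, d⟫ ≤
        ‖gradient s (a + t • d) - gradient s a‖ * ‖d‖ := real_inner_le_norm _ _
    have h2 : ‖gradient s (a + t • d) - gradient s a‖ ≤ L * (t * ‖d‖) := by
      have := hLip (a + t • d) a
      simpa [norm_smul, abs_of_pos ht.1] using this
    have h3 : ‖gradient s (a + t • d) - gradient s a‖ * ‖d‖ ≤ L * (t * ‖d‖) * ‖d‖ :=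
      mul_le_mul_of_nonneg_right h2 (norm_nonneg _)
    have h4 : ⟪gradient s (a + t • d) - gradient s a, d⟫ =
        ⟪gradient s (a + t • d), d⟫ - ⟪gradient s a, d⟫ := inner_sub_left _ _ _
    nlinarith [norm_nonneg d]
  have hanti : AntitoneOn φ (Set.Icc 0 1) := by
    apply antitoneOn_of_deriv_nonpos (convex_Icc 0 1)
    · apply Continuous.continuousOn
      have : Continuous fun t : ℝ => a + t • d := by fun_prop
      have hsc : Continuous s := hs.continuous
      rw [hφ]
      fun_prop
    · intro t ht
      exact (hφ' t).differentiableAt.differentiableWithinAt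
    · intro t ht
      rw [interior_Icc] at ht
      rw [(hφ' t).deriv]
      exact hbound t ht
  have h01 : φ 1 ≤ φ 0 := hanti (by norm_num) (by norm_num) (by norm_num)
  have e0 : φ 0 = s a := by simp [hφ]
  have e1 : φ 1 = s b - ⟪gradient s a, d⟫ - L / 2 * ‖d‖ ^ 2 := by
    simp [hφ, hd]
  rw [e0, e1] at h01
  linarith

lemma norm_combo_sq
    {E : Type*} [NormedAddCommGroup E] [InnerProductSpace ℝ E]
    (a b : E) (t : ℝ) :
    ‖t • a + (1 - t) • b‖ ^ 2 =
      t * ‖a‖ ^ 2 + (1 - t) * ‖b‖ ^ 2 - t * (1 - t) * ‖a - b‖ ^ 2 := by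
  simp only [← real_inner_self_eq_norm_sq, inner_add_left, inner_add_right, inner_sub_left,
    inner_sub_right, real_inner_smul_left, real_inner_smul_right, real_inner_comm a b]
  ring

/-- Sufficient decrease: let `s : E → ℝ` be differentiable with `L`-Lipschitz gradient
(`L > 0`), `h` a proper closed convex function, `S = s + h`. If `v` minimizes
`y ↦ h(y) + (L/2)‖y − (x − (1/L)∇s(x))‖²`, then
`S(x) − S(v) ≥ (1/(2L))‖L(x − v)‖²`. -/
theorem sufficient_decrease
    {E : Type*} [NormedAddCommGroup E] [InnerProductSpace ℝ E] [CompleteSpace E]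
    (s : E → ℝ) (hs : Differentiable ℝ s)
    (L : ℝ) (hL : 0 < L)
    (hLip : ∀ a b : E, ‖gradient s a - gradient s b‖ ≤ L * ‖a - b‖)
    (h : E → EReal)
    (hproper_bot : ∀ x : E, h x ≠ ⊥) (hproper_top : ∃ x : E, h x ≠ ⊤)
    (hclosed : LowerSemicontinuous h)
    (hconvex : ∀ x y : E, ∀ t : ℝ, 0 ≤ t → t ≤ 1 →
      h (t • x + (1 - t) • y) ≤ (t : EReal) * h x + ((1 - t : ℝ) : EReal) * h y)
    (S : E → EReal) (hS : ∀ x : E, S x = (s x : EReal) + h x)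
    (x v : E)
    (hmin : ∀ y : E,
      h v + ((L / 2 * ‖v - (x - (1 / L) • gradient s x)‖ ^ 2 : ℝ) : EReal)
        ≤ h y + ((L / 2 * ‖y - (x - (1 / L) • gradient s x)‖ ^ 2 : ℝ) : EReal)) :
    S v + ((1 / (2 * L) * ‖L • (x - v)‖ ^ 2 : ℝ) : EReal) ≤ S x := by
  by_cases hxtop : h x = ⊤
  · rw [hS x, hxtop]
    simp [EReal.add_top_of_ne_bot]
  -- h x is a real number
  obtain ⟨hx, hhx⟩ : ∃ r : ℝ, h x = (r : EReal) := by
    lift h x to ℝ using ⟨hxtop, hproper_bot x⟩ with r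
    exact ⟨r, rfl⟩
  set u := x - (1 / L) • gradient s x with hu
  -- h v is a real number
  have hvtop : h v ≠ ⊤ := by
    intro hvt
    have hmx := hmin x
    rw [hvt, hhx, ← EReal.coe_add, EReal.top_add_coe] at hmx
    exact absurd (top_le_iff.mp hmx) (EReal.coe_ne_top _)
  obtain ⟨hv, hhv⟩ : ∃ r : ℝ, h v = (r : EReal) := by
    lift h v to ℝ using ⟨hvtop, hproper_bot v⟩ with r
    exact ⟨r, rfl⟩
  -- key real inequality from minimality and convexity
  have key : ∀ t : ℝ, 0 < t → t ≤ 1 →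
      hv + L / 2 * ‖v - u‖ ^ 2 + (1 - t) * (L / 2 * ‖x - v‖ ^ 2)
        ≤ hx + L / 2 * ‖x - u‖ ^ 2 := by
    intro t ht0 ht1
    set yt := t • x + (1 - t) • v with hyt
    have hmy := hmin yt
    have hcy := hconvex x v t ht0.le ht1
    have hchain : h v + ((L / 2 * ‖v - u‖ ^ 2 : ℝ) : EReal) ≤
        ((t * hx + (1 - t) * hv : ℝ) : EReal) +
          ((L / 2 * ‖yt - u‖ ^ 2 : ℝ) : EReal) := by
      refine hmy.trans (add_le_add_left ?_ _)
      rw [hhx, hhv] at hcy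
      calc h yt ≤ (t : EReal) * (hx : EReal) + ((1 - t : ℝ) : EReal) * (hv : EReal) := hcy
        _ = ((t * hx + (1 - t) * hv : ℝ) : EReal) := by
            rw [← EReal.coe_mul, ← EReal.coe_mul, ← EReal.coe_add]
    rw [hhv, ← EReal.coe_add, ← EReal.coe_add, EReal.coe_le_coe_iff] at hchain
    have hq : ‖yt - u‖ ^ 2 = t * ‖x - u‖ ^ 2 + (1 - t) * ‖v - u‖ ^ 2
        - t * (1 - t) * ‖x - v‖ ^ 2 := by
      have : yt - u = t • (x - u) + (1 - t) • (v - u) := by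
        rw [hyt]
        module
      rw [this, norm_combo_sq]
      congr 2
      rw [show (x - u) - (v - u) = x - v by abel]
    rw [hq] at hchain
    -- divide by t
    have := mul_le_mul_of_nonneg_left (le_refl (0:ℝ)) (le_refl (0:ℝ))
    nlinarith [hchain, ht0]
  have key0 : hv + L / 2 * ‖v - u‖ ^ 2 + L / 2 * ‖x - v‖ ^ 2
      ≤ hx + L / 2 * ‖x - u‖ ^ 2 := by
    rw [← sub_nonneg]
    by_contra hneg
    push_neg at hneg
    set R := hx + L / 2 * ‖x - u‖ ^ 2 - (hv + L / 2 * ‖v - u‖ ^ 2 + L / 2 * ‖x - v‖ ^ 2)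
      with hR
    set K := L / 2 * ‖x - v‖ ^ 2 with hK
    have hK0 : 0 ≤ K := by positivity
    have ht : ∀ t : ℝ, 0 < t → t ≤ 1 → -R ≤ t * K := by
      intro t ht0 ht1
      have := key t ht0 ht1
      rw [hR]
      nlinarith
    rcases lt_or_ge K 0 with hKlt | _
    · linarith
    have hKpos : 0 < K + 1 := by linarith
    have htt : (0:ℝ) < min 1 ((-R) / (2 * (K + 1))) := by
      apply lt_min one_pos
      apply div_pos (by linarith) (by linarith)
    have := ht _ htt (min_le_left _ _)
    have h5 : min 1 ((-R) / (2 * (K + 1))) * K ≤ ((-R) / (2 * (K + 1))) * K :=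
      mul_le_mul_of_nonneg_right (min_le_right _ _) hK0
    have h6 : ((-R) / (2 * (K + 1))) * K < -R := by
      rw [div_mul_eq_mul_div, div_lt_iff₀ (by linarith)]
      nlinarith
    linarith
  -- expand the squared norms
  have e1 : ‖v - u‖ ^ 2 = ‖v - x‖ ^ 2 + 2 * ((1/L) * ⟪gradient s x, v - x⟫)
      + (1/L) ^ 2 * ‖gradient s x‖ ^ 2 := by
    have : v - u = (v - x) + (1 / L) • gradient s x := by rw [hu]; abel
    rw [this, norm_add_sq_real, real_inner_smul_right, norm_smul]
    rw [Real.norm_eq_abs, abs_of_pos (by positivity : (0:ℝ) < 1 / L)]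
    rw [real_inner_comm]
    ring
  have e2 : ‖x - u‖ ^ 2 = (1/L) ^ 2 * ‖gradient s x‖ ^ 2 := by
    have : x - u = (1 / L) • gradient s x := by rw [hu]; abel
    rw [this, norm_smul, Real.norm_eq_abs, abs_of_pos (by positivity : (0:ℝ) < 1 / L)]
    ring
  have hdesc := descent_lemma s hs L hL hLip x v
  -- final real inequality
  have final : s v + hv + 1 / (2 * L) * ‖L • (x - v)‖ ^ 2 ≤ s x + hx := by
    have hLne : L ≠ 0 := ne_of_gt hL
    have e3 : ‖L • (x - v)‖ ^ 2 = L ^ 2 * ‖x - v‖ ^ 2 := by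
      rw [norm_smul, Real.norm_eq_abs, abs_of_pos hL]; ring
    have e4 : ‖v - x‖ ^ 2 = ‖x - v‖ ^ 2 := by rw [norm_sub_rev]
    have e5 : ‖v - x‖ = ‖x - v‖ := norm_sub_rev v x
    rw [e1, e2, e4] at key0
    have expand : L / 2 * (‖x - v‖ ^ 2 + 2 * (1/L * ⟪gradient s x, v - x⟫)
        + (1/L) ^ 2 * ‖gradient s x‖ ^ 2)
        = L / 2 * ‖x - v‖ ^ 2 + ⟪gradient s x, v - x⟫
          + L / 2 * ((1/L) ^ 2 * ‖gradient s x‖ ^ 2) := by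
      field_simp
    rw [expand] at key0
    rw [e5] at hdesc
    rw [e3]
    have : 1 / (2 * L) * (L ^ 2 * ‖x - v‖ ^ 2) = L / 2 * ‖x - v‖ ^ 2 := by
      field_simp
    rw [this]
    linarith [key0, hdesc]
  rw [hS x, hS v, hhx, hhv, ← EReal.coe_add, ← EReal.coe_add, ← EReal.coe_add,
    EReal.coe_le_coe_iff]
  linarith [final]
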